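/- Let G be a graph with n vertices and m edges, and let k ≥ 2 be an integer with m ≥ k(k−1)/2. Let G' be the clique-reduction graph of (G, k). Then G contains a clique on k vertices if and only if G' contains a nonempty path P with |V(P)| ≤ k(k−1)/2 and |N_{G'}(V(P))| ≤ m − k(k−1)/2 + k. -/

import Mathlib

open SimpleGraph

/-- The open neighborhood of a vertex set `S`: vertices outside `S` adjacent to some
vertex of `S`. -/
def openNbhd {V : Type*} (G : SimpleGraph V) (S : Set V) : Set V :=
  {v | v ∉ S ∧ ∃ w ∈ S, G.Adj v w}

/-- The clique-reduction graph of `(G, k)`: its vertices are a copy `V'` of `V(G)`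
(the `Sum.inl` vertices), one vertex `v_e` for each edge `e` of `G`
(the `Sum.inr (Sum.inl e)` vertices) and a set `C` of `m + k + 1` further vertices
(the `Sum.inr (Sum.inr i)` vertices), where `m` is the number of edges of `G`.
Each `v_e` is adjacent to the copies of both endpoints of `e`; the edge-vertices
form a clique; `C` forms a clique; and every vertex of `C` is adjacent to every
vertex of `V'`. -/
def cliqueRed {V : Type*} [Fintype V] [DecidableEq V] (G : SimpleGraph V)
    [DecidableRel G.Adj] (k : ℕ) :
    SimpleGraph (V ⊕ (G.edgeSet ⊕ Fin (G.edgeFinset.card + k + 1))) :=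
  SimpleGraph.fromRel (fun a b =>
    match a, b with
    | Sum.inl v, Sum.inr (Sum.inl e) => v ∈ (e : Sym2 V)
    | Sum.inr (Sum.inl e), Sum.inr (Sum.inl e') => e ≠ e'
    | Sum.inr (Sum.inr i), Sum.inr (Sum.inr j) => i ≠ j
    | Sum.inl _, Sum.inr (Sum.inr _) => True
    | _, _ => False)

section Aux
variable {V : Type*} [Fintype V] [DecidableEq V] (G : SimpleGraph V) [DecidableRel G.Adj] (k : ℕ)

lemma cr_adj_ve (v : V) (e : G.edgeSet) :
    (cliqueRed G k).Adj (Sum.inl v) (Sum.inr (Sum.inl e)) ↔ v ∈ (e : Sym2 V) := by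
  simp [cliqueRed]

lemma cr_adj_ee (e e' : G.edgeSet) :
    (cliqueRed G k).Adj (Sum.inr (Sum.inl e)) (Sum.inr (Sum.inl e')) ↔ e ≠ e' := by
  simp [cliqueRed]; tauto

lemma cr_adj_vc (v : V) (i : Fin (G.edgeFinset.card + k + 1)) :
    (cliqueRed G k).Adj (Sum.inl v) (Sum.inr (Sum.inr i)) := by
  simp [cliqueRed]

lemma cr_adj_cc (i j : Fin (G.edgeFinset.card + k + 1)) :
    (cliqueRed G k).Adj (Sum.inr (Sum.inr i)) (Sum.inr (Sum.inr j)) ↔ i ≠ j := by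
  simp [cliqueRed]; tauto

lemma cr_not_adj_ec (e : G.edgeSet) (i : Fin (G.edgeFinset.card + k + 1)) :
    ¬ (cliqueRed G k).Adj (Sum.inr (Sum.inl e)) (Sum.inr (Sum.inr i)) := by
  simp [cliqueRed]

lemma cr_not_adj_vv (v w : V) : ¬ (cliqueRed G k).Adj (Sum.inl v) (Sum.inl w) := by
  simp [cliqueRed]

lemma card_edgeSet_eq : Fintype.card G.edgeSet = G.edgeFinset.card :=
  (Set.toFinset_card _).symm

end Aux

lemma exists_path_support {α : Type*} (H : SimpleGraph α) :
    ∀ (l : List α) (a : α), (a :: l).Nodup → (a :: l).Pairwise H.Adj →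
      ∃ (v : α) (p : H.Walk a v), p.IsPath ∧ p.support = a :: l := by
  intro l
  induction l with
  | nil => exact fun a _ _ => ⟨a, SimpleGraph.Walk.nil, SimpleGraph.Walk.IsPath.nil, rfl⟩
  | cons b l ih =>
    intro a hnd hpw
    obtain ⟨v, p, hp, hs⟩ := ih b (List.nodup_cons.1 hnd).2 (List.pairwise_cons.1 hpw).2
    have hab : H.Adj a b := (List.pairwise_cons.1 hpw).1 b (List.mem_cons_self)
    refine ⟨v, SimpleGraph.Walk.cons hab p, hp.cons ?_, by simp [hs]⟩
    rw [hs]; exact (List.nodup_cons.1 hnd).1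

lemma arith_key (k t L : ℕ) (hk : 2 ≤ k) (hL1 : 1 ≤ L) (hLK : L ≤ k.choose 2)
    (hLt : L ≤ t.choose 2) (htk : t + (k.choose 2 - L) ≤ k) :
    t = k ∧ L = k.choose 2 := by
  have h2 : ∀ n : ℕ, 2 * n.choose 2 = n * (n - 1) := by
    intro n
    rw [Nat.choose_two_right, Nat.mul_div_cancel']
    match n with
    | 0 => simp
    | n + 1 => simpa [Nat.mul_comm] using (Nat.even_mul_succ_self n).two_dvd
  have ht2 : 2 ≤ t := by
    by_contra h
    have : t.choose 2 = 0 := Nat.choose_eq_zero_of_lt (by omega)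
    omega
  obtain ⟨d, hdL⟩ : ∃ d, k.choose 2 = L + d := ⟨k.choose 2 - L, by omega⟩
  have htc : t ≤ k - d := by omega
  have hch := Nat.choose_le_choose 2 htc
  have e2 := h2 k
  have e3 := h2 (k - d)
  have e4 := h2 t
  obtain ⟨b, hb⟩ : ∃ b, k = b + 2 + d := ⟨k - 2 - d, by omega⟩
  have hkk : k * (k - 1) = (b + 2 + d) * (b + 1 + d) := by rw [hb]; congr 1; omega
  have hkd : (k - d) * (k - d - 1) = (b + 2) * (b + 1) := by congr 1 <;> omega
  have hub : (b + 2 + d) * (b + 1 + d) ≤ (b + 2) * (b + 1) + 2 * d := by omega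
  have hd0 : d = 0 := by
    by_contra hdne
    obtain ⟨d', rfl⟩ : ∃ d', d = d' + 1 := ⟨d - 1, by omega⟩
    nlinarith
  subst hd0
  refine ⟨?_, by omega⟩
  obtain ⟨s, hs⟩ : ∃ s, t = s + 2 := ⟨t - 2, by omega⟩
  have hts : t * (t - 1) = (s + 2) * (s + 1) := by rw [hs]; rfl
  have hlow : (b + 2 + 0) * (b + 1 + 0) ≤ (s + 2) * (s + 1) := by omega
  have hsb : s + 2 ≤ b + 2 + 0 := by omega
  have : b ≤ s := by nlinarith
  omega

set_option maxHeartbeats 1000000 in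
lemma forward_dir {V : Type*} [Fintype V] [DecidableEq V] (G : SimpleGraph V)
    [DecidableRel G.Adj] (k : ℕ) (hk : 2 ≤ k) (S : Finset V) (hS : G.IsNClique k S) :
    ∃ (u v : V ⊕ (G.edgeSet ⊕ Fin (G.edgeFinset.card + k + 1)))
      (p : (cliqueRed G k).Walk u v), p.IsPath ∧
      p.support.length ≤ k.choose 2 ∧
      (openNbhd (cliqueRed G k) {x | x ∈ p.support}).ncard ≤
        G.edgeFinset.card - k.choose 2 + k := by
  classical
  set F : Finset G.edgeSet :=
    Finset.univ.filter (fun e => (e : Sym2 V) ∈ S.offDiag.image Sym2.mk.uncurry) with hF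
  have himg : F.image (Subtype.val) = S.offDiag.image Sym2.mk.uncurry := by
    apply Finset.Subset.antisymm
    · intro z hz
      rw [Finset.mem_image] at hz
      obtain ⟨e, heF, rfl⟩ := hz
      rw [hF, Finset.mem_filter] at heF
      exact heF.2
    · intro z hz
      have hz' := hz
      simp only [Finset.mem_image, Finset.mem_offDiag] at hz'
      obtain ⟨⟨a, b⟩, ⟨ha, hb, hab⟩, rfl⟩ := hz'
      have hadj : G.Adj a b := hS.1 (Finset.mem_coe.2 ha) (Finset.mem_coe.2 hb) hab
      exact Finset.mem_image.2 ⟨⟨s(a, b), hadj⟩, by rw [hF]; exact Finset.mem_filter.2 ⟨Finset.mem_univ _, hz⟩, rfl⟩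
  have hFcard : F.card = k.choose 2 := by
    rw [← Finset.card_image_of_injective F Subtype.val_injective, himg,
      Sym2.card_image_offDiag, hS.2]
  have hK1 : 1 ≤ k.choose 2 := by
    have := Nat.choose_le_choose 2 hk; simpa using this
  have hFne : F.toList ≠ [] := by
    intro h
    have := Finset.length_toList F
    rw [h] at this; simp at this; omega
  obtain ⟨x₀, l₀, hl₀⟩ := List.exists_cons_of_ne_nil hFne
  set f : G.edgeSet → V ⊕ (G.edgeSet ⊕ Fin (G.edgeFinset.card + k + 1)) :=
    fun e => Sum.inr (Sum.inl e) with hf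
  have hfinj : Function.Injective f := fun a b h => by simpa [hf] using h
  set g : V → V ⊕ (G.edgeSet ⊕ Fin (G.edgeFinset.card + k + 1)) := Sum.inl with hg
  have hginj : Function.Injective g := fun a b h => by simpa [hg] using h
  have hnd : (f x₀ :: l₀.map f).Nodup := by
    have : (F.toList.map f).Nodup := (F.nodup_toList).map hfinj
    rwa [hl₀, List.map_cons] at this
  have hpw : (f x₀ :: l₀.map f).Pairwise (cliqueRed G k).Adj := by
    have h1 : F.toList.Pairwise (· ≠ ·) := F.nodup_toList
    have h2 : (F.toList.map f).Pairwise (cliqueRed G k).Adj :=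
      List.Pairwise.map f (fun a b hab => (cr_adj_ee G k a b).2 hab) h1
    rwa [hl₀, List.map_cons] at h2
  obtain ⟨v, p, hp, hs⟩ := exists_path_support (cliqueRed G k) (l₀.map f) (f x₀) hnd hpw
  have hsupp : p.support = F.toList.map f := by rw [hs, hl₀, List.map_cons]
  have hmem : ∀ x, x ∈ p.support ↔ ∃ e ∈ F, f e = x := by
    intro x; simp [hsupp, List.mem_map, Finset.mem_toList]
  refine ⟨_, _, p, hp, ?_, ?_⟩
  · rw [hsupp, List.length_map, Finset.length_toList, hFcard]
  · have hsub : openNbhd (cliqueRed G k) {x | x ∈ p.support} ⊆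
        (f '' ↑(Fᶜ)) ∪ (g '' ↑S) := by
      rintro x ⟨hx1, w, hw, hadj⟩
      simp only [Set.mem_setOf_eq] at hx1 hw
      rw [hmem] at hw
      obtain ⟨e, heF, rfl⟩ := hw
      match x with
      | Sum.inl v =>
        right
        have hv : v ∈ (e : Sym2 V) := (cr_adj_ve G k v e).1 hadj
        have hme : (e : Sym2 V) ∈ S.offDiag.image Sym2.mk.uncurry := by
          have := heF; rw [hF, Finset.mem_filter] at this; exact this.2
        obtain ⟨⟨a, b⟩, hab, hef⟩ := Finset.mem_image.1 hme
        rw [Finset.mem_offDiag] at hab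
        have hv2 : v = a ∨ v = b := by rw [← hef] at hv; simpa using hv
        refine ⟨v, ?_, by rw [hg]⟩
        rcases hv2 with rfl | rfl
        · exact hab.1
        · exact hab.2.1
      | Sum.inr (Sum.inl e') =>
        left
        refine ⟨e', ?_, rfl⟩
        simp only [Finset.coe_compl, Set.mem_compl_iff, Finset.mem_coe]
        intro he'
        exact hx1 ((hmem _).2 ⟨e', he', rfl⟩)
      | Sum.inr (Sum.inr i) => exact absurd hadj.symm (cr_not_adj_ec G k e i)
    have hfin : ((f '' ↑(Fᶜ)) ∪ (g '' ↑S)).Finite :=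
      ((Fᶜ).finite_toSet.image f).union (S.finite_toSet.image g)
    calc (openNbhd (cliqueRed G k) {x | x ∈ p.support}).ncard
        ≤ ((f '' ↑(Fᶜ)) ∪ (g '' ↑S)).ncard :=
          Set.ncard_le_ncard hsub hfin
      _ ≤ (f '' ↑(Fᶜ)).ncard + (g '' ↑S).ncard := Set.ncard_union_le _ _
      _ = (Fᶜ).card + S.card := by
          rw [Set.ncard_image_of_injective _ hfinj,
            Set.ncard_image_of_injective _ hginj]
          simp only [← Finset.coe_compl, Set.ncard_coe_finset]
      _ = G.edgeFinset.card - k.choose 2 + k := by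
          rw [Finset.card_compl, hFcard, card_edgeSet_eq, hS.2]

set_option maxHeartbeats 1000000 in
lemma backward_dir {V : Type*} [Fintype V] [DecidableEq V] (G : SimpleGraph V)
    [DecidableRel G.Adj] (k : ℕ) (hk : 2 ≤ k) (hm : k.choose 2 ≤ G.edgeFinset.card)
    (u v : V ⊕ (G.edgeSet ⊕ Fin (G.edgeFinset.card + k + 1)))
    (p : (cliqueRed G k).Walk u v) (hp : p.IsPath)
    (hlen : p.support.length ≤ k.choose 2)
    (hnb : (openNbhd (cliqueRed G k) {x | x ∈ p.support}).ncard ≤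
      G.edgeFinset.card - k.choose 2 + k) :
    ∃ S : Finset V, G.IsNClique k S := by
  classical
  have hsuppset : {x | x ∈ p.support} = ↑p.support.toFinset := by ext x; simp
  have hsuppcard : ({x | x ∈ p.support}).ncard ≤ k.choose 2 := by
    rw [hsuppset, Set.ncard_coe_finset, List.card_toFinset]
    exact le_trans (p.support.dedup_sublist.length_le) hlen
  -- Step A: every support vertex is an edge-vertex
  have hC : ∀ x ∈ p.support, ∃ e : G.edgeSet, x = Sum.inr (Sum.inl e) := by
    intro x hx
    by_contra hxe
    push_neg at hxe
    set c : Fin (G.edgeFinset.card + k + 1) →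
        V ⊕ (G.edgeSet ⊕ Fin (G.edgeFinset.card + k + 1)) :=
      fun i => Sum.inr (Sum.inr i) with hc
    have hcinj : Function.Injective c := fun a b h => by simpa [hc] using h
    have hsubC : (c '' Set.univ) \ {x | x ∈ p.support} ⊆
        openNbhd (cliqueRed G k) {x | x ∈ p.support} := by
      rintro y ⟨⟨i, -, rfl⟩, hc2⟩
      refine ⟨hc2, x, hx, ?_⟩
      match x, hxe with
      | Sum.inl w, _ => exact (cr_adj_vc G k w i).symm
      | Sum.inr (Sum.inl e), hxe => exact absurd rfl (hxe e)
      | Sum.inr (Sum.inr j), _ =>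
        refine (cr_adj_cc G k i j).2 (fun h => hc2 ?_)
        rw [hc]; simp only [Set.mem_setOf_eq]; rw [h]; exact hx
    have himgc : (c '' Set.univ).ncard = G.edgeFinset.card + k + 1 := by
      rw [Set.ncard_image_of_injective _ hcinj, Set.ncard_univ,
        Nat.card_eq_fintype_card, Fintype.card_fin]
    have hdiffl := Set.le_ncard_diff {x | x ∈ p.support} (c '' Set.univ) (Set.toFinite _)
    have hmono := Set.ncard_le_ncard hsubC (Set.toFinite _)
    omega
  have hne : p.support ≠ [] := p.support_ne_nil
  obtain ⟨x₀, l₀, hl₀⟩ := List.exists_cons_of_ne_nil hne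
  obtain ⟨e₀, he₀⟩ := hC x₀ (by rw [hl₀]; exact List.mem_cons_self)
  have he₀s : Sum.inr (Sum.inl e₀) ∈ p.support := by
    rw [← he₀, hl₀]; exact List.mem_cons_self
  have hL1 : 1 ≤ p.support.length := by rw [hl₀]; simp
  set f : G.edgeSet → V ⊕ (G.edgeSet ⊕ Fin (G.edgeFinset.card + k + 1)) :=
    fun e => Sum.inr (Sum.inl e) with hf
  have hfinj : Function.Injective f := fun a b h => by simpa [hf] using h
  set g : V → V ⊕ (G.edgeSet ⊕ Fin (G.edgeFinset.card + k + 1)) := Sum.inl with hg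
  have hginj : Function.Injective g := fun a b h => by simpa [hg] using h
  haveI : DecidablePred (fun e : G.edgeSet =>
      (Sum.inr (Sum.inl e) : V ⊕ (G.edgeSet ⊕ Fin (G.edgeFinset.card + k + 1)))
        ∈ p.support) := fun e => Classical.propDecidable _
  set F : Finset G.edgeSet :=
    Finset.univ.filter (fun e : G.edgeSet =>
      (Sum.inr (Sum.inl e) : V ⊕ (G.edgeSet ⊕ Fin (G.edgeFinset.card + k + 1)))
        ∈ p.support) with hF
  have hFmem : ∀ e : G.edgeSet, e ∈ F ↔ f e ∈ p.support := by
    intro e; rw [hF, Finset.mem_filter, hf]; simp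
  have he₀F : e₀ ∈ F := (hFmem e₀).2 he₀s
  have hFcard : F.card = p.support.length := by
    have himg : F.image f = p.support.toFinset := by
      ext x
      simp only [Finset.mem_image, List.mem_toFinset]
      constructor
      · rintro ⟨e, he, rfl⟩; exact (hFmem e).1 he
      · intro hx
        obtain ⟨e, rfl⟩ := hC x hx
        exact ⟨e, (hFmem e).2 hx, rfl⟩
    calc F.card = (F.image f).card := (Finset.card_image_of_injective _ hfinj).symm
      _ = p.support.toFinset.card := by rw [himg]
      _ = p.support.length := by
          rw [List.card_toFinset, (hp.support_nodup).dedup]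
  set T : Finset V := Finset.univ.filter (fun w : V => ∃ e ∈ F, w ∈ (e : Sym2 V)) with hT
  have hTmem : ∀ w : V, w ∈ T ↔ ∃ e ∈ F, w ∈ (e : Sym2 V) := by
    intro w; rw [hT, Finset.mem_filter]; simp
  -- Step C: neighborhood lower bound
  have hsub2 : (f '' ↑(Fᶜ)) ∪ (g '' ↑T) ⊆
      openNbhd (cliqueRed G k) {x | x ∈ p.support} := by
    rintro x (⟨e, he, rfl⟩ | ⟨w, hw, rfl⟩)
    · have heF : e ∉ F := by simpa using he
      refine ⟨fun hx => heF ((hFmem e).2 hx), f e₀, he₀s, ?_⟩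
      exact (cr_adj_ee G k e e₀).2 (fun h => heF (h ▸ he₀F))
    · have hwT := (hTmem w).1 (by simpa using hw)
      obtain ⟨e, heF, hwe⟩ := hwT
      refine ⟨?_, f e, (hFmem e).1 heF, (cr_adj_ve G k w e).2 hwe⟩
      intro hx
      obtain ⟨e', he'⟩ := hC _ hx
      rw [hg] at he'; simp at he'
  have hdisj : Disjoint (f '' ↑(Fᶜ)) (g '' ↑T) := by
    rw [Set.disjoint_left]
    rintro x ⟨e, -, rfl⟩ ⟨w, -, h⟩
    rw [hf, hg] at h; simp at h
  have hcnt : (Fintype.card G.edgeSet - F.card) + T.card ≤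
      G.edgeFinset.card - k.choose 2 + k := by
    have hum : ((f '' ↑(Fᶜ)) ∪ (g '' ↑T)).ncard = (Fintype.card G.edgeSet - F.card) + T.card := by
      rw [Set.ncard_union_eq hdisj ((Fᶜ).finite_toSet.image f) (T.finite_toSet.image g),
        Set.ncard_image_of_injective _ hfinj, Set.ncard_image_of_injective _ hginj,
        Set.ncard_coe_finset, Set.ncard_coe_finset, Finset.card_compl]
    have := Set.ncard_le_ncard hsub2 (Set.toFinite _)
    omega
  -- Step D: edges of F live on T
  have himgF : F.image Subtype.val ⊆ T.offDiag.image Sym2.mk.uncurry := by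
    intro z hz
    obtain ⟨e, heF, rfl⟩ := Finset.mem_image.1 hz
    obtain ⟨a, b, hab⟩ : ∃ a b, (e : Sym2 V) = s(a, b) :=
      (e : Sym2 V).inductionOn (fun a b => ⟨a, b, rfl⟩)
    have hadj : G.Adj a b := G.mem_edgeSet.1 (hab ▸ e.2)
    have haT : a ∈ T := (hTmem a).2 ⟨e, heF, by rw [hab]; simp⟩
    have hbT : b ∈ T := (hTmem b).2 ⟨e, heF, by rw [hab]; simp⟩
    exact Finset.mem_image.2 ⟨(a, b), Finset.mem_offDiag.2 ⟨haT, hbT, hadj.ne⟩, hab.symm⟩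
  have hLle : p.support.length ≤ (T.card).choose 2 := by
    calc p.support.length = F.card := hFcard.symm
      _ = (F.image Subtype.val).card :=
          (Finset.card_image_of_injective _ Subtype.val_injective).symm
      _ ≤ (T.offDiag.image Sym2.mk.uncurry).card := Finset.card_le_card himgF
      _ = (T.card).choose 2 := Sym2.card_image_offDiag T
  have hmm : Fintype.card G.edgeSet = G.edgeFinset.card := card_edgeSet_eq G
  have htk : T.card + (k.choose 2 - p.support.length) ≤ k := by omega
  obtain ⟨ht, hL⟩ := arith_key k T.card p.support.length hk hL1 hlen hLle htk
  have hEq : F.image Subtype.val = T.offDiag.image Sym2.mk.uncurry := by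
    refine Finset.eq_of_subset_of_card_le himgF ?_
    rw [Sym2.card_image_offDiag, ht,
      Finset.card_image_of_injective _ Subtype.val_injective, hFcard, hL]
  refine ⟨T, ⟨?_, ht⟩⟩
  intro a ha b hb hne
  have hzz : s(a, b) ∈ T.offDiag.image Sym2.mk.uncurry :=
    Finset.mem_image.2 ⟨(a, b),
      Finset.mem_offDiag.2 ⟨Finset.mem_coe.1 ha, Finset.mem_coe.1 hb, hne⟩, rfl⟩
  rw [← hEq] at hzz
  obtain ⟨e, heF, hee⟩ := Finset.mem_image.1 hzz
  exact G.mem_edgeSet.1 (hee ▸ e.2)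

/-- `G` contains a clique on `k` vertices iff the clique-reduction graph `G'` contains
a nonempty path `P` with `|V(P)| ≤ k(k−1)/2` and
`|N_{G'}(V(P))| ≤ m − k(k−1)/2 + k`. -/
theorem stmt_16 {V : Type*} [Fintype V] [DecidableEq V] (G : SimpleGraph V)
    [DecidableRel G.Adj] (k : ℕ) (hk : 2 ≤ k)
    (hm : k * (k - 1) / 2 ≤ G.edgeFinset.card) :
    (∃ S : Finset V, G.IsNClique k S) ↔
      ∃ (u v : V ⊕ (G.edgeSet ⊕ Fin (G.edgeFinset.card + k + 1)))
        (p : (cliqueRed G k).Walk u v), p.IsPath ∧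
        p.support.length ≤ k * (k - 1) / 2 ∧
        (openNbhd (cliqueRed G k) {x | x ∈ p.support}).ncard ≤
          G.edgeFinset.card - k * (k - 1) / 2 + k := by
  rw [← Nat.choose_two_right] at hm ⊢
  constructor
  · rintro ⟨S, hS⟩
    exact forward_dir G k hk S hS
  · rintro ⟨u, v, p, hp, hlen, hnb⟩
    exact backward_dir G k hk hm u v p hp hlen hnb
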